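/- If (x, n, B, k) is a prefix polymorphism with n = 2 and k = 2, then 1 + 8·B² is a perfect square, say 1 + 8·B² = z² with z a positive integer, and x = (1 + z)/2; in particular z² − 8·B² = 1, so (z, B) is a solution of the Pell equation z² − 8·B² = 1. -/
import Mathlib


/-- A quadruple `(x, n, B, k)` of positive integers with `B ≥ 2` is a *prefix
polymorphism* if `x^n = B^k·n + x` and `B^(k-1) ≤ x < B^k` (i.e. `x` has exactly
`k` digits in base `B`). -/
def IsPrefixPolymorphism (x n B k : ℕ) : Prop :=
  0 < x ∧ 0 < n ∧ 2 ≤ B ∧ 0 < k ∧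
    x ^ n = B ^ k * n + x ∧ B ^ (k - 1) ≤ x ∧ x < B ^ k

/-- Pell class, forward direction: if `(x, 2, B, 2)` is a prefix polymorphism,
then `1 + 8·B² = z²` for a positive integer `z`, `x = (1 + z)/2`, and
`(z, B)` solves the Pell equation `z² - 8·B² = 1`. -/
theorem pell_class_forward (x B : ℕ) (h : IsPrefixPolymorphism x 2 B 2) :
    ∃ z : ℕ, 0 < z ∧ 1 + 8 * B ^ 2 = z ^ 2 ∧ x = (1 + z) / 2 ∧
      (z : ℤ) ^ 2 - 8 * (B : ℤ) ^ 2 = 1 := by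
  obtain ⟨hx, -, hB, -, heq, -, -⟩ := h
  refine ⟨2 * x - 1, by omega, ?_, by omega, ?_⟩
  · have h2 : 2 * x - 1 = 2 * x - 1 := rfl
    nlinarith [Nat.sub_add_cancel (by omega : 1 ≤ 2 * x), heq]
  · have hsq : 1 + 8 * B ^ 2 = (2 * x - 1) ^ 2 := by
      nlinarith [Nat.sub_add_cancel (by omega : 1 ≤ 2 * x), heq]
    have := congrArg (fun m : ℕ => (m : ℤ)) hsq
    push_cast at this
    linarith
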